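/- arXiv:1509.05057 — 3 statements merged into one kernel-verified Lean document; each statement's English description precedes it below -/
import Mathlib

section
/- Let G be a finite simple graph, I a maximum critical independent set, and X = I ∪ N(I). Then |nucleus(G)| + |diadem(G)| ≤ |nucleus(G[X])| + |diadem(G[X])|. -/
open Set

variable {V : Type*} [Fintype V]

/-- `S` is an independent set in `G`: no two of its vertices are adjacent. -/
def IsIndep (G : SimpleGraph V) (S : Set V) : Prop :=
  ∀ u ∈ S, ∀ v ∈ S, ¬ G.Adj u v

/-- The neighborhood `N(X)` of a set of vertices. -/
def nbhd (G : SimpleGraph V) (X : Set V) : Set V := {v | ∃ u ∈ X, G.Adj u v}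

/-- The difference `d(X) = |X| - |N(X)|` computed in the induced subgraph `G[W]`
(neighborhoods are intersected with `W`). -/
noncomputable def dOn (G : SimpleGraph V) (W X : Set V) : ℤ :=
  (X.ncard : ℤ) - ((nbhd G X ∩ W).ncard : ℤ)

/-- The difference `d(X) = |X| - |N(X)|` in `G`. -/
noncomputable def dG (G : SimpleGraph V) (X : Set V) : ℤ := dOn G Set.univ X

/-- `S` is a critical independent set of the induced subgraph `G[W]`:
it is an independent subset of `W` whose difference attains
`max {d(Y) : Y ⊆ W}` (the critical difference of `G[W]`). -/
def IsCritIndepOn (G : SimpleGraph V) (W S : Set V) : Prop :=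
  S ⊆ W ∧ IsIndep G S ∧ ∀ Y ⊆ W, dOn G W Y ≤ dOn G W S

/-- `S` is a critical independent set of `G`. -/
def IsCritIndep (G : SimpleGraph V) (S : Set V) : Prop := IsCritIndepOn G Set.univ S

/-- A maximum critical independent set of `G[W]`: a critical independent set of
largest cardinality. -/
def IsMaxCritIndepOn (G : SimpleGraph V) (W S : Set V) : Prop :=
  IsCritIndepOn G W S ∧ ∀ T, IsCritIndepOn G W T → T.ncard ≤ S.ncard

/-- A maximum critical independent set of `G`. -/
def IsMaxCritIndep (G : SimpleGraph V) (S : Set V) : Prop := IsMaxCritIndepOn G Set.univ S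

/-- A maximum independent set of the induced subgraph `G[W]`. -/
def IsMaxIndepOn (G : SimpleGraph V) (W S : Set V) : Prop :=
  S ⊆ W ∧ IsIndep G S ∧ ∀ T ⊆ W, IsIndep G T → T.ncard ≤ S.ncard

/-- A maximum independent set of `G`. -/
def IsMaxIndep (G : SimpleGraph V) (S : Set V) : Prop := IsMaxIndepOn G Set.univ S

/-- The independence number of the induced subgraph `G[W]`. -/
noncomputable def alphaOn (G : SimpleGraph V) (W : Set V) : ℕ :=
  sSup {n | ∃ S ⊆ W, IsIndep G S ∧ S.ncard = n}

/-- The independence number `α(G)`. -/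
noncomputable def alpha (G : SimpleGraph V) : ℕ := alphaOn G Set.univ

/-- The maximum matching number `μ(G)`. -/
noncomputable def mu (G : SimpleGraph V) : ℕ :=
  sSup {n | ∃ M : G.Subgraph, M.IsMatching ∧ M.edgeSet.ncard = n}

/-- `G` is a König-Egerváry graph: `α(G) + μ(G) = |V(G)|`. -/
def IsKE (G : SimpleGraph V) : Prop := alpha G + mu G = Fintype.card V

/-- `nucleus(G[W])`: intersection of all maximum critical independent sets of `G[W]`. -/
def nucleusOn (G : SimpleGraph V) (W : Set V) : Set V := ⋂₀ {S | IsMaxCritIndepOn G W S}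

/-- `nucleus(G)`. -/
def nucleus (G : SimpleGraph V) : Set V := nucleusOn G Set.univ

/-- `diadem(G[W])`: union of all maximum critical independent sets of `G[W]`. -/
def diademOn (G : SimpleGraph V) (W : Set V) : Set V := ⋃₀ {S | IsMaxCritIndepOn G W S}

/-- `diadem(G)`. -/
def diadem (G : SimpleGraph V) : Set V := diademOn G Set.univ

/-- `ker(G)`: intersection of all critical independent sets of `G`. -/
def kerG (G : SimpleGraph V) : Set V := ⋂₀ {S | IsCritIndep G S}

/-- `core(G)`: intersection of all maximum independent sets of `G`. -/
def core (G : SimpleGraph V) : Set V := ⋂₀ {S | IsMaxIndep G S}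

/-- `corona(G)`: union of all maximum independent sets of `G`. -/
def corona (G : SimpleGraph V) : Set V := ⋃₀ {S | IsMaxIndep G S}

set_option linter.unusedSectionVars false

section Aux

variable {G : SimpleGraph V} {A B S I Z Y T : Set V} {v : V}

lemma nbhd_mono (h : A ⊆ B) : nbhd G A ⊆ nbhd G B := by
  rintro v ⟨u, hu, hadj⟩; exact ⟨u, h hu, hadj⟩

lemma nbhd_union : nbhd G (A ∪ B) = nbhd G A ∪ nbhd G B := by
  ext v
  constructor
  · rintro ⟨u, hu | hu, hadj⟩
    · exact Or.inl ⟨u, hu, hadj⟩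
    · exact Or.inr ⟨u, hu, hadj⟩
  · rintro (⟨u, hu, hadj⟩ | ⟨u, hu, hadj⟩)
    · exact ⟨u, Or.inl hu, hadj⟩
    · exact ⟨u, Or.inr hu, hadj⟩

lemma mem_nbhd_of_adj {u : V} (hu : u ∈ A) (h : G.Adj u v) : v ∈ nbhd G A := ⟨u, hu, h⟩

lemma indep_notMem_nbhd (hS : IsIndep G S) (hv : v ∈ S) : v ∉ nbhd G S := by
  rintro ⟨u, hu, hadj⟩
  exact hS u hu v hv hadj

lemma dG_eq (Y : Set V) : dG G Y = (Y.ncard : ℤ) - ((nbhd G Y).ncard : ℤ) := by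
  simp [dG, dOn]

/-- supermodularity of the difference function -/
lemma dG_supermod (A B : Set V) : dG G A + dG G B ≤ dG G (A ∪ B) + dG G (A ∩ B) := by
  simp only [dG_eq]
  have h1 : (A ∪ B).ncard + (A ∩ B).ncard = A.ncard + B.ncard :=
    Set.ncard_union_add_ncard_inter A B
  have h2 : (nbhd G (A ∪ B)).ncard = (nbhd G A ∪ nbhd G B).ncard := by rw [nbhd_union]
  have h3 : (nbhd G (A ∩ B)).ncard ≤ (nbhd G A ∩ nbhd G B).ncard := by
    exact Set.ncard_le_ncard
      (subset_inter (nbhd_mono inter_subset_left) (nbhd_mono inter_subset_right))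
  have h4 : (nbhd G A ∪ nbhd G B).ncard + (nbhd G A ∩ nbhd G B).ncard
      = (nbhd G A).ncard + (nbhd G B).ncard := Set.ncard_union_add_ncard_inter _ _
  push_cast [← h1, h2]
  omega

/-- removing the neighborhood only improves the difference, and yields an independent set -/
lemma indep_diff_nbhd (Z : Set V) : IsIndep G (Z \ nbhd G Z) := by
  rintro u ⟨huZ, hun⟩ w ⟨hwZ, hwn⟩ hadj
  exact hwn ⟨u, huZ, hadj⟩

lemma dG_diff_nbhd (Z : Set V) : dG G Z ≤ dG G (Z \ nbhd G Z) := by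
  simp only [dG_eq]
  have h1 : (Z \ nbhd G Z).ncard = Z.ncard - (Z ∩ nbhd G Z).ncard := by
    rw [← Set.ncard_diff (inter_subset_left (t := nbhd G Z))]
    congr 1; ext v; simp only [mem_diff, mem_inter_iff]; tauto
  have h1' : (Z ∩ nbhd G Z).ncard ≤ Z.ncard := Set.ncard_le_ncard inter_subset_left
  have h2 : nbhd G (Z \ nbhd G Z) ⊆ nbhd G Z \ (Z ∩ nbhd G Z) := by
    rintro v ⟨u, ⟨huZ, hun⟩, hadj⟩
    refine ⟨⟨u, huZ, hadj⟩, ?_⟩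
    rintro ⟨hvZ, -⟩
    exact hun ⟨v, hvZ, hadj.symm⟩
  have h3 : (nbhd G (Z \ nbhd G Z)).ncard ≤ (nbhd G Z \ (Z ∩ nbhd G Z)).ncard :=
    Set.ncard_le_ncard h2
  have h4 : (nbhd G Z \ (Z ∩ nbhd G Z)).ncard
      = (nbhd G Z).ncard - (Z ∩ nbhd G Z).ncard :=
    Set.ncard_diff inter_subset_right
  have h5 : (Z ∩ nbhd G Z).ncard ≤ (nbhd G Z).ncard := Set.ncard_le_ncard inter_subset_right
  omega
lemma dG_le_of_critIndep (hS : IsCritIndep G S) (Y : Set V) : dG G Y ≤ dG G S :=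
  hS.2.2 Y (subset_univ _)

lemma critIndep_subset (hI : IsMaxCritIndep G I) (hS : IsCritIndep G S) :
    S ⊆ I ∪ nbhd G I := by
  have hIind : IsIndep G I := hI.1.2.1
  have hSind : IsIndep G S := hS.2.1
  have hImax : ∀ Y, dG G Y ≤ dG G I := dG_le_of_critIndep hI.1
  have hSmax : ∀ Y, dG G Y ≤ dG G S := dG_le_of_critIndep hS
  set Z := S ∪ I with hZ
  have hdZ : dG G I ≤ dG G Z := by
    have h := dG_supermod (G := G) S I
    rw [← hZ] at h
    have h2 := hSmax (S ∩ I)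
    omega
  set Zi := Z \ nbhd G Z with hZi
  have hZiind : IsIndep G Zi := indep_diff_nbhd Z
  have hdZi : dG G I ≤ dG G Zi := hdZ.trans (dG_diff_nbhd Z)
  set K := Zi ∪ I with hK
  have hKind : IsIndep G K := by
    rintro u (hu | hu) v (hv | hv) hadj
    · exact hZiind u hu v hv hadj
    · exact hu.2 ⟨v, Or.inr hv, hadj.symm⟩
    · exact hv.2 ⟨u, Or.inr hu, hadj⟩
    · exact hIind u hu v hv hadj
  have hdK : dG G I ≤ dG G K := by
    have h := dG_supermod (G := G) Zi I
    rw [← hK] at h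
    have h2 := hImax (Zi ∩ I)
    omega
  have hKcrit : IsCritIndep G K :=
    ⟨subset_univ _, hKind, fun Y _ => (hImax Y).trans hdK⟩
  have hKcard : K.ncard ≤ I.ncard := hI.2 K hKcrit
  have hsub : I ∪ (S \ (I ∪ nbhd G I)) ⊆ K := by
    rintro v (hv | ⟨hvS, hvX⟩)
    · exact Or.inr hv
    · refine Or.inl ⟨Or.inl hvS, ?_⟩
      rw [hZ, nbhd_union]
      rintro (h | h)
      · exact indep_notMem_nbhd hSind hvS h
      · exact hvX (Or.inr h)
  have hdisj : Disjoint I (S \ (I ∪ nbhd G I)) := by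
    rw [Set.disjoint_left]
    rintro v hv ⟨-, hvX⟩
    exact hvX (Or.inl hv)
  have hcard : I.ncard + (S \ (I ∪ nbhd G I)).ncard ≤ I.ncard := by
    rw [← Set.ncard_union_eq hdisj]
    exact (Set.ncard_le_ncard hsub).trans hKcard
  have : (S \ (I ∪ nbhd G I)).ncard = 0 := by omega
  rw [Set.ncard_eq_zero] at this
  exact diff_eq_empty.mp this
lemma hall_cond (hI : IsMaxCritIndep G I) (hA : A ⊆ nbhd G I) :
    A.ncard ≤ (nbhd G A ∩ I).ncard := by
  have hIind : IsIndep G I := hI.1.2.1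
  have hImax : ∀ Y, dG G Y ≤ dG G I := dG_le_of_critIndep hI.1
  set Y := I \ nbhd G A with hY
  have h1 : I.ncard ≤ Y.ncard + (nbhd G A ∩ I).ncard := by
    have : I ⊆ Y ∪ (nbhd G A ∩ I) := by
      intro v hv
      by_cases h : v ∈ nbhd G A
      · exact Or.inr ⟨h, hv⟩
      · exact Or.inl ⟨hv, h⟩
    exact (Set.ncard_le_ncard this).trans (Set.ncard_union_le _ _)
  have h2 : nbhd G Y ⊆ nbhd G I \ A := by
    rintro v ⟨u, ⟨huI, hun⟩, hadj⟩
    refine ⟨⟨u, huI, hadj⟩, fun hvA => hun ⟨v, hvA, hadj.symm⟩⟩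
  have h3 : (nbhd G I \ A).ncard + A.ncard = (nbhd G I).ncard :=
    Set.ncard_diff_add_ncard_of_subset hA
  have h4 : (nbhd G Y).ncard ≤ (nbhd G I \ A).ncard := Set.ncard_le_ncard h2
  have h5 : dG G Y ≤ dG G I := hImax Y
  rw [dG_eq, dG_eq] at h5
  omega

lemma exists_matching (hI : IsMaxCritIndep G I) :
    ∃ f : V → V, Set.InjOn f (nbhd G I) ∧ ∀ a ∈ nbhd G I, f a ∈ I ∧ G.Adj a (f a) := by
  classical
  set N := nbhd G I with hN
  have hhall : ∀ s : Finset ↥N,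
      s.card ≤ (s.biUnion (fun a => (Set.toFinite {v | v ∈ I ∧ G.Adj a.1 v}).toFinset)).card := by
    intro s
    set A : Set V := Subtype.val '' (↑s : Set ↥N) with hA
    have hAsub : A ⊆ N := by rintro v ⟨a, -, rfl⟩; exact a.2
    have hcard : A.ncard = s.card := by
      rw [hA, Set.ncard_image_of_injective _ Subtype.val_injective, Set.ncard_coe_finset]
    have hsub : nbhd G A ∩ I ⊆
        ↑(s.biUnion (fun a => (Set.toFinite {v | v ∈ I ∧ G.Adj a.1 v}).toFinset)) := by
      rintro v ⟨⟨u, ⟨a, has, rfl⟩, hadj⟩, hvI⟩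
      simp only [Finset.coe_biUnion, Finset.mem_coe, Set.mem_iUnion]
      exact ⟨a, has, by simp [Set.Finite.mem_toFinset]; exact ⟨hvI, hadj⟩⟩
    have := (Set.ncard_le_ncard hsub).trans_eq (Set.ncard_coe_finset _)
    have hmain := hall_cond hI hAsub
    omega
  obtain ⟨f₀, hf₀inj, hf₀⟩ := (Finset.all_card_le_biUnion_card_iff_exists_injective _).mp hhall
  refine ⟨fun v => if h : v ∈ N then f₀ ⟨v, h⟩ else v, ?_, ?_⟩
  · intro a ha b hb hab
    simp only [dif_pos ha, dif_pos hb] at hab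
    exact congrArg Subtype.val (hf₀inj hab)
  · intro a ha
    simp only [dif_pos ha]
    have := hf₀ ⟨a, ha⟩
    rw [Set.Finite.mem_toFinset] at this
    exact ⟨this.1, this.2⟩
lemma part_card (hIind : IsIndep G I) (hTX : T ⊆ I ∪ nbhd G I) :
    T.ncard = (T ∩ I).ncard + (T ∩ nbhd G I).ncard := by
  have heq : T = (T ∩ I) ∪ (T ∩ nbhd G I) := by
    ext v
    constructor
    · intro hv
      rcases hTX hv with h | h
      · exact Or.inl ⟨hv, h⟩
      · exact Or.inr ⟨hv, h⟩
    · rintro (⟨h, -⟩ | ⟨h, -⟩) <;> exact h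
  rw [← Set.ncard_union_eq ?_, ← heq]
  rw [Set.disjoint_left]
  rintro v ⟨-, hvI⟩ ⟨-, hvN⟩
  exact indep_notMem_nbhd hIind hvI hvN

lemma maps_into_diff {f : V → V} (hf : ∀ a ∈ nbhd G I, f a ∈ I ∧ G.Adj a (f a))
    (hT : IsIndep G T) : ∀ a ∈ T ∩ nbhd G I, f a ∈ I \ T := by
  rintro a ⟨haT, haN⟩
  obtain ⟨h1, h2⟩ := hf a haN
  exact ⟨h1, fun hfT => hT a haT (f a) hfT h2⟩

lemma indep_card_le (hI : IsMaxCritIndep G I) {f : V → V} (hfinj : Set.InjOn f (nbhd G I))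
    (hf : ∀ a ∈ nbhd G I, f a ∈ I ∧ G.Adj a (f a))
    (hT : IsIndep G T) (hTX : T ⊆ I ∪ nbhd G I) : T.ncard ≤ I.ncard := by
  have h1 := part_card hI.1.2.1 hTX
  have h2 : (T ∩ nbhd G I).ncard ≤ (I \ T).ncard :=
    Set.ncard_le_ncard_of_injOn f (maps_into_diff hf hT)
      (hfinj.mono inter_subset_right)
  have h3 : (I \ (I ∩ T)).ncard + (I ∩ T).ncard = I.ncard :=
    Set.ncard_diff_add_ncard_of_subset inter_subset_left
  rw [Set.diff_self_inter] at h3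
  rw [Set.inter_comm] at h1
  omega

lemma dOn_le_c (hI : IsMaxCritIndep G I) (hY : Y ⊆ I ∪ nbhd G I) :
    dOn G (I ∪ nbhd G I) Y ≤ dG G I := by
  have hIind : IsIndep G I := hI.1.2.1
  set A := Y ∩ I with hA
  set B := Y ∩ nbhd G I with hB
  have h1 : Y.ncard = A.ncard + B.ncard := part_card hIind hY
  have h2 : B.ncard ≤ (nbhd G B ∩ I).ncard := hall_cond hI inter_subset_right
  have hsub : nbhd G A ∪ (nbhd G B ∩ I) ⊆ nbhd G Y ∩ (I ∪ nbhd G I) := by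
    rintro v (hv | ⟨hv, hvI⟩)
    · exact ⟨nbhd_mono inter_subset_left hv,
        Or.inr (nbhd_mono inter_subset_right hv)⟩
    · exact ⟨nbhd_mono inter_subset_left hv, Or.inl hvI⟩
  have hdisj : Disjoint (nbhd G A) (nbhd G B ∩ I) := by
    rw [Set.disjoint_left]
    rintro v hv ⟨-, hvI⟩
    exact indep_notMem_nbhd hIind hvI (nbhd_mono inter_subset_right hv)
  have h3 : (nbhd G A).ncard + (nbhd G B ∩ I).ncard ≤ (nbhd G Y ∩ (I ∪ nbhd G I)).ncard := by
    rw [← Set.ncard_union_eq hdisj]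
    exact Set.ncard_le_ncard hsub
  have h4 : dG G A ≤ dG G I := dG_le_of_critIndep hI.1 A
  rw [dG_eq, dG_eq] at h4
  simp only [dOn]
  rw [dG_eq]
  omega

lemma dOn_I_eq (hI : IsMaxCritIndep G I) : dOn G (I ∪ nbhd G I) I = dG G I := by
  simp only [dOn, dG, Set.inter_univ]
  rw [Set.inter_eq_self_of_subset_left subset_union_right]

lemma critIndepOn_I (hI : IsMaxCritIndep G I) : IsCritIndepOn G (I ∪ nbhd G I) I :=
  ⟨subset_union_left, hI.1.2.1, fun Y hY => (dOn_le_c hI hY).trans_eq (dOn_I_eq hI).symm⟩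

lemma critIndep_to_On (hI : IsMaxCritIndep G I) (hS : IsCritIndep G S) :
    IsCritIndepOn G (I ∪ nbhd G I) S := by
  have hSX := critIndep_subset hI hS
  refine ⟨hSX, hS.2.1, fun Y hY => (dOn_le_c hI hY).trans ?_⟩
  have h1 : dG G S = dG G I :=
    le_antisymm (dG_le_of_critIndep hI.1 S) (dG_le_of_critIndep hS I)
  have h2 : dG G S ≤ dOn G (I ∪ nbhd G I) S := by
    rw [dG_eq]
    simp only [dOn]
    have : (nbhd G S ∩ (I ∪ nbhd G I)).ncard ≤ (nbhd G S).ncard :=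
      Set.ncard_le_ncard inter_subset_left
    omega
  omega

lemma maxCritOn_card (hI : IsMaxCritIndep G I) {f : V → V} (hfinj : Set.InjOn f (nbhd G I))
    (hf : ∀ a ∈ nbhd G I, f a ∈ I ∧ G.Adj a (f a))
    (hT : IsMaxCritIndepOn G (I ∪ nbhd G I) T) : T.ncard = I.ncard :=
  le_antisymm (indep_card_le hI hfinj hf hT.1.2.1 hT.1.1) (hT.2 I (critIndepOn_I hI))

lemma maxCrit_to_On (hI : IsMaxCritIndep G I) (hS : IsMaxCritIndep G S) :
    IsMaxCritIndepOn G (I ∪ nbhd G I) S := by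
  obtain ⟨f, hfinj, hf⟩ := exists_matching hI
  refine ⟨critIndep_to_On hI hS.1, fun T hT => ?_⟩
  exact (indep_card_le hI hfinj hf hT.2.1 hT.1).trans (hS.2 I hI.1)

lemma surj_of_maxCritOn (hI : IsMaxCritIndep G I) {f : V → V}
    (hfinj : Set.InjOn f (nbhd G I)) (hf : ∀ a ∈ nbhd G I, f a ∈ I ∧ G.Adj a (f a))
    (hT : IsMaxCritIndepOn G (I ∪ nbhd G I) T) {v : V} (hv : v ∈ I \ T) :
    ∃ b ∈ T ∩ nbhd G I, f b = v := by
  have hmaps := maps_into_diff hf hT.1.2.1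
  have hinj : Set.InjOn f (T ∩ nbhd G I) := hfinj.mono inter_subset_right
  have himg : f '' (T ∩ nbhd G I) ⊆ I \ T := by
    rintro w ⟨a, ha, rfl⟩; exact hmaps a ha
  have h1 : T.ncard = (T ∩ I).ncard + (T ∩ nbhd G I).ncard := part_card hI.1.2.1 hT.1.1
  have h2 : (I \ (I ∩ T)).ncard + (I ∩ T).ncard = I.ncard :=
    Set.ncard_diff_add_ncard_of_subset inter_subset_left
  rw [Set.diff_self_inter] at h2
  have h3 : T.ncard = I.ncard := by
    obtain ⟨g, hginj, hg⟩ := exists_matching hI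
    exact maxCritOn_card hI hginj hg hT
  have h4 : (I \ T).ncard ≤ (f '' (T ∩ nbhd G I)).ncard := by
    rw [Set.ncard_image_of_injOn hinj, Set.inter_comm I T] at *
    omega
  have heq : f '' (T ∩ nbhd G I) = I \ T := Set.eq_of_subset_of_ncard_le himg h4
  rw [← heq] at hv
  obtain ⟨b, hb, hbv⟩ := hv
  exact ⟨b, hb, hbv⟩
end Aux

/-- For a maximum critical independent set `I` and `X = I ∪ N(I)`,
`|nucleus(G)| + |diadem(G)| ≤ |nucleus(G[X])| + |diadem(G[X])|`. -/
theorem stmt9 (G : SimpleGraph V) (I X : Set V) (hI : IsMaxCritIndep G I)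
    (hX : X = I ∪ nbhd G I) :
    (nucleus G).ncard + (diadem G).ncard ≤ (nucleusOn G X).ncard + (diademOn G X).ncard := by
  subst hX
  set X := I ∪ nbhd G I with hXdef
  obtain ⟨f, hfinj, hf⟩ := exists_matching hI
  set n : Set V := nucleus G with hn
  set n' : Set V := nucleusOn G X with hn'
  set D : Set V := diadem G with hD
  set D' : Set V := diademOn G X with hD'
  have hmem_n : ∀ v, v ∈ n ↔ ∀ S, IsMaxCritIndep G S → v ∈ S := by
    intro v; exact Set.mem_sInter
  have hmem_n' : ∀ v, v ∈ n' ↔ ∀ S, IsMaxCritIndepOn G X S → v ∈ S := by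
    intro v; exact Set.mem_sInter
  have hn'n : n' ⊆ n := by
    intro v hv
    rw [hmem_n]
    intro S hS
    exact (hmem_n' v).mp hv S (maxCrit_to_On hI hS)
  have hDD' : D ⊆ D' := by
    rintro v ⟨S, hS, hvS⟩
    exact ⟨S, maxCrit_to_On hI hS, hvS⟩
  have hkey : ∀ v ∈ n \ n', ∃ b, b ∈ D' \ D ∧ f b = v := by
    rintro v ⟨hvn, hvn'⟩
    have hvI : v ∈ I := (hmem_n v).mp hvn I hI
    rw [hmem_n'] at hvn'
    push_neg at hvn'
    obtain ⟨T, hT, hvT⟩ := hvn'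
    obtain ⟨b, hb, hbv⟩ := surj_of_maxCritOn hI hfinj hf hT ⟨hvI, hvT⟩
    refine ⟨b, ⟨⟨T, hT, hb.1⟩, ?_⟩, hbv⟩
    rintro ⟨S, hS, hbS⟩
    have hvS : v ∈ S := (hmem_n v).mp hvn S hS
    have hadj : G.Adj b v := hbv ▸ (hf b hb.2).2
    exact hS.1.2.1 b hbS v hvS hadj
  choose! φ hφ1 hφ2 using hkey
  have hinj : Set.InjOn φ (n \ n') := by
    intro a ha b hb hab
    rw [← hφ2 a ha, ← hφ2 b hb, hab]
  have hcard : (n \ n').ncard ≤ (D' \ D).ncard :=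
    Set.ncard_le_ncard_of_injOn φ (fun a ha => hφ1 a ha) hinj
  have h1 : (n \ n').ncard + n'.ncard = n.ncard :=
    Set.ncard_diff_add_ncard_of_subset hn'n
  have h2 : (D' \ D).ncard + D.ncard = D'.ncard :=
    Set.ncard_diff_add_ncard_of_subset hDD'
  omega
end

section
/- If G is a finite simple König-Egerváry graph, then |nucleus(G)| + |diadem(G)| = 2α(G). -/
open Set

variable {V : Type*} [Fintype V]

/-! ### Auxiliary lemmas -/

lemma aux_indep_le_alpha (G : SimpleGraph V) {S : Set V} (hS : IsIndep G S) :
    S.ncard ≤ alpha G := by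
  have hbdd : BddAbove {n | ∃ S ⊆ (Set.univ : Set V), IsIndep G S ∧ S.ncard = n} := by
    refine ⟨Fintype.card V, ?_⟩
    rintro n ⟨T, -, -, rfl⟩
    have := Set.ncard_le_ncard (Set.subset_univ T) (Set.toFinite _)
    simpa [Set.ncard_univ, Nat.card_eq_fintype_card] using this
  exact le_csSup hbdd ⟨S, Set.subset_univ S, hS, rfl⟩

lemma aux_exists_max_indep (G : SimpleGraph V) :
    ∃ S : Set V, IsMaxIndep G S ∧ S.ncard = alpha G := by
  have hbdd : BddAbove {n | ∃ S ⊆ (Set.univ : Set V), IsIndep G S ∧ S.ncard = n} := by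
    refine ⟨Fintype.card V, ?_⟩
    rintro n ⟨T, -, -, rfl⟩
    have := Set.ncard_le_ncard (Set.subset_univ T) (Set.toFinite _)
    simpa [Set.ncard_univ, Nat.card_eq_fintype_card] using this
  have hne : {n | ∃ S ⊆ (Set.univ : Set V), IsIndep G S ∧ S.ncard = n}.Nonempty :=
    ⟨0, ∅, Set.empty_subset _, fun u hu => absurd hu (Set.notMem_empty u), Set.ncard_empty V⟩
  obtain ⟨S, hsub, hind, hcard⟩ := Nat.sSup_mem hne hbdd
  exact ⟨S, ⟨hsub, hind, fun T _ hT => hcard ▸ aux_indep_le_alpha G hT⟩, hcard⟩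

lemma aux_max_indep_card (G : SimpleGraph V) {S : Set V} (hS : IsMaxIndep G S) :
    S.ncard = alpha G := by
  obtain ⟨T, hT, hTc⟩ := aux_exists_max_indep G
  exact le_antisymm (aux_indep_le_alpha G hS.2.1)
    (hTc ▸ hS.2.2 T (Set.subset_univ T) hT.2.1)

lemma aux_exists_max_matching (G : SimpleGraph V) :
    ∃ M : G.Subgraph, M.IsMatching ∧ M.edgeSet.ncard = mu G := by
  have hbdd : BddAbove {n | ∃ M : G.Subgraph, M.IsMatching ∧ M.edgeSet.ncard = n} := by
    refine ⟨Nat.card (Sym2 V), ?_⟩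
    rintro n ⟨M, -, rfl⟩
    have := Set.ncard_le_ncard (Set.subset_univ M.edgeSet) (Set.toFinite _)
    simpa [Set.ncard_univ] using this
  have hne : {n | ∃ M : G.Subgraph, M.IsMatching ∧ M.edgeSet.ncard = n}.Nonempty := by
    refine ⟨0, ⊥, fun v hv => ?_, by simp⟩
    simp only [SimpleGraph.Subgraph.verts_bot, Set.mem_empty_iff_false] at hv
  obtain ⟨M, hM, hc⟩ := Nat.sSup_mem hne hbdd
  exact ⟨M, hM, hc⟩

lemma aux_matching_verts_ncard {G : SimpleGraph V} {M : G.Subgraph} (hM : M.IsMatching) :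
    M.verts.ncard = 2 * M.edgeSet.ncard := by
  classical
  set F : Sym2 V → Finset V := fun e => Finset.univ.filter (· ∈ e) with hF
  have hFcard : ∀ e ∈ M.edgeSet, (F e).card = 2 := by
    intro e he
    induction e with
    | h a b =>
      have hab : M.Adj a b := (SimpleGraph.Subgraph.mem_edgeSet).mp he
      have hne : a ≠ b := (G.ne_of_adj (M.adj_sub hab))
      have : F s(a, b) = {a, b} := by
        ext x
        simp [hF, Sym2.mem_iff]
      rw [this, Finset.card_insert_of_notMem (by simpa using hne), Finset.card_singleton]
  have hdisj : ∀ e₁ ∈ M.edgeSet.toFinset, ∀ e₂ ∈ M.edgeSet.toFinset, e₁ ≠ e₂ →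
      Disjoint (F e₁) (F e₂) := by
    intro e₁ he₁ e₂ he₂m hne
    rw [Set.mem_toFinset] at he₁
    rw [Set.mem_toFinset] at he₂m
    rw [Finset.disjoint_left]
    intro x hx1 hx2
    simp only [hF, Finset.mem_filter] at hx1 hx2
    obtain ⟨y₁, rfl⟩ := Sym2.mem_iff_exists.mp hx1.2
    obtain ⟨y₂, rfl⟩ := Sym2.mem_iff_exists.mp hx2.2
    have h1 : M.Adj x y₁ := (SimpleGraph.Subgraph.mem_edgeSet).mp he₁
    have h2 : M.Adj x y₂ := (SimpleGraph.Subgraph.mem_edgeSet).mp he₂m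
    obtain ⟨w, -, hw⟩ := hM (M.edge_vert h1)
    exact hne (by rw [hw y₁ h1, hw y₂ h2])
  have hunion : M.verts.toFinset = M.edgeSet.toFinset.biUnion F := by
    ext v
    simp only [Set.mem_toFinset, Finset.mem_biUnion, Set.mem_toFinset]
    constructor
    · intro hv
      obtain ⟨w, hw, -⟩ := hM hv
      exact ⟨s(v, w), (SimpleGraph.Subgraph.mem_edgeSet).mpr hw, by simp [hF]⟩
    · rintro ⟨e, he, hve⟩
      simp only [hF, Finset.mem_filter] at hve
      obtain ⟨y, rfl⟩ := Sym2.mem_iff_exists.mp hve.2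
      exact M.edge_vert ((SimpleGraph.Subgraph.mem_edgeSet).mp he)
  have := Finset.card_biUnion hdisj
  rw [Set.ncard_eq_toFinset_card', Set.ncard_eq_toFinset_card', hunion, this]
  rw [Finset.sum_congr rfl (fun e he => hFcard e (Set.mem_toFinset.mp he))]
  simp [mul_comm]

lemma aux_exists_mate {G : SimpleGraph V} {M : G.Subgraph} (hM : M.IsMatching) :
    ∃ m : V → V, (∀ v ∈ M.verts, M.Adj v (m v)) ∧ (∀ v w, M.Adj v w → m v = w) := by
  classical
  refine ⟨fun v => if h : v ∈ M.verts then (hM h).choose else v, fun v hv => ?_, fun v w hvw => ?_⟩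
  · simp only [dif_pos hv]
    exact (hM hv).choose_spec.1
  · have hv : v ∈ M.verts := M.edge_vert hvw
    simp only [dif_pos hv]
    exact ((hM hv).choose_spec.2 w hvw).symm

/-- Structure of a maximum independent set in a KE graph w.r.t. a maximum matching:
its complement is matched, and each matching edge has exactly one endpoint in `S`. -/
lemma aux_structure {G : SimpleGraph V} (hKE : IsKE G)
    {M : G.Subgraph} (hM : M.IsMatching) (hMcard : M.edgeSet.ncard = mu G)
    {m : V → V} (hm1 : ∀ v ∈ M.verts, M.Adj v (m v)) (hm2 : ∀ v w, M.Adj v w → m v = w)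
    {S : Set V} (hS : IsMaxIndep G S) :
    Sᶜ ⊆ M.verts ∧ (∀ v ∈ M.verts, (v ∈ S ↔ m v ∉ S)) := by
  have hminv : ∀ v ∈ M.verts, m (m v) = v := fun v hv => hm2 _ _ (hm1 v hv).symm
  have hmmem : ∀ v ∈ M.verts, m v ∈ M.verts := fun v hv => M.edge_vert (hm1 v hv).symm
  have hmG : ∀ v ∈ M.verts, G.Adj v (m v) := fun v hv => M.adj_sub (hm1 v hv)
  have hminj : Set.InjOn m M.verts := by
    intro v hv w hw hvw
    rw [← hminv v hv, hvw, hminv w hw]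
  have hScard : S.ncard = alpha G := aux_max_indep_card G hS
  have hcompl : S.ncard + Sᶜ.ncard = Fintype.card V := by
    rw [Set.ncard_add_ncard_compl S (Set.toFinite _) (Set.toFinite _)]
    exact Nat.card_eq_fintype_card
  have hSc : Sᶜ.ncard = mu G := by
    have := hKE
    unfold IsKE at this
    omega
  have hverts : M.verts.ncard = 2 * mu G := by rw [aux_matching_verts_ncard hM, hMcard]
  -- A = S ∩ verts, B = Sᶜ ∩ verts
  have hABcard : (S ∩ M.verts).ncard + (Sᶜ ∩ M.verts).ncard = 2 * mu G := by
    rw [← hverts]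
    rw [Set.inter_comm S, Set.inter_comm Sᶜ]
    have h1 : M.verts ∩ Sᶜ = M.verts \ S := by ext x; simp [Set.mem_diff]
    rw [h1]
    exact Set.ncard_inter_add_ncard_diff_eq_ncard M.verts S (Set.toFinite _)
  have hmA : ∀ v ∈ S ∩ M.verts, m v ∈ Sᶜ ∩ M.verts := by
    rintro v ⟨hvS, hvM⟩
    refine ⟨fun hmS => ?_, hmmem v hvM⟩
    exact hS.2.1 v hvS (m v) hmS (hmG v hvM)
  have hAleB : (S ∩ M.verts).ncard ≤ (Sᶜ ∩ M.verts).ncard := by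
    have h1 : (m '' (S ∩ M.verts)).ncard = (S ∩ M.verts).ncard :=
      Set.ncard_image_of_injOn (hminj.mono (Set.inter_subset_right))
    rw [← h1]
    exact Set.ncard_le_ncard (by rintro x ⟨v, hv, rfl⟩; exact hmA v hv) (Set.toFinite _)
  have hBle : (Sᶜ ∩ M.verts).ncard ≤ Sᶜ.ncard :=
    Set.ncard_le_ncard (Set.inter_subset_left) (Set.toFinite _)
  have hBeq : (Sᶜ ∩ M.verts).ncard = mu G := by omega
  have hcompl_sub : Sᶜ ∩ M.verts = Sᶜ := by
    exact Set.eq_of_subset_of_ncard_le (Set.inter_subset_left) (by rw [hBeq, hSc])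
      (Set.toFinite _)
  have hsub : Sᶜ ⊆ M.verts := by
    intro v hv
    rw [← hcompl_sub] at hv
    exact hv.2
  refine ⟨hsub, ?_⟩
  -- m '' A = B
  have hAeq : (S ∩ M.verts).ncard = mu G := by omega
  have himg : m '' (S ∩ M.verts) = Sᶜ ∩ M.verts := by
    exact Set.eq_of_subset_of_ncard_le (by rintro x ⟨v, hv, rfl⟩; exact hmA v hv)
      (by rw [Set.ncard_image_of_injOn (hminj.mono (Set.inter_subset_right)), hAeq, hBeq])
      (Set.toFinite _)
  intro v hv
  constructor
  · intro hvS hmS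
    exact hS.2.1 v hvS (m v) hmS (hmG v hv)
  · intro hmS
    by_contra hvS
    have : v ∈ Sᶜ ∩ M.verts := ⟨hvS, hv⟩
    rw [← himg] at this
    obtain ⟨u, huA, hu⟩ := this
    have : m v = u := by rw [← hu, hminv u huA.2]
    exact hmS (this ▸ huA.1)

/-- In a KE graph, every maximum independent set is a critical independent set. -/
lemma aux_max_indep_isCrit {G : SimpleGraph V} (hKE : IsKE G) {S : Set V}
    (hS : IsMaxIndep G S) : IsCritIndep G S := by
  obtain ⟨M, hM, hMcard⟩ := aux_exists_max_matching G
  obtain ⟨m, hm1, hm2⟩ := aux_exists_mate hM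
  obtain ⟨hsub, hiff⟩ := aux_structure hKE hM hMcard hm1 hm2 hS
  have hmmem : ∀ v ∈ M.verts, m v ∈ M.verts := fun v hv => M.edge_vert (hm1 v hv).symm
  have hmG : ∀ v ∈ M.verts, G.Adj v (m v) := fun v hv => M.adj_sub (hm1 v hv)
  have hminv : ∀ v ∈ M.verts, m (m v) = v := fun v hv => hm2 _ _ (hm1 v hv).symm
  have hminj : Set.InjOn m M.verts := by
    intro v hv w hw hvw
    rw [← hminv v hv, hvw, hminv w hw]
  refine ⟨Set.subset_univ S, hS.2.1, ?_⟩
  intro Y _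
  -- d(S) = 2α - n
  have hNS : nbhd G S = Sᶜ := by
    ext w
    constructor
    · rintro ⟨u, huS, hadj⟩ hwS
      exact hS.2.1 u huS w hwS hadj
    · intro hw
      have hwM : w ∈ M.verts := hsub hw
      have hmwS : m w ∈ S := by
        by_contra hmw
        exact hw ((hiff w hwM).mpr hmw)
      exact ⟨m w, hmwS, ((hmG w hwM).symm : G.Adj (m w) w)⟩
  have hScard : S.ncard = alpha G := aux_max_indep_card G hS
  have hcomplS : S.ncard + Sᶜ.ncard = Fintype.card V := by
    rw [Set.ncard_add_ncard_compl S (Set.toFinite _) (Set.toFinite _)]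
    exact Nat.card_eq_fintype_card
  have hverts : M.verts.ncard = 2 * mu G := by rw [aux_matching_verts_ncard hM, hMcard]
  have hcomplM : M.verts.ncard + M.vertsᶜ.ncard = Fintype.card V := by
    rw [Set.ncard_add_ncard_compl M.verts (Set.toFinite _) (Set.toFinite _)]
    exact Nat.card_eq_fintype_card
  -- |N(Y)| ≥ |Y ∩ M.verts|
  have hNY : (Y ∩ M.verts).ncard ≤ (nbhd G Y).ncard := by
    have h1 : (m '' (Y ∩ M.verts)).ncard = (Y ∩ M.verts).ncard :=
      Set.ncard_image_of_injOn (hminj.mono (Set.inter_subset_right))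
    rw [← h1]
    refine Set.ncard_le_ncard ?_ (Set.toFinite _)
    rintro x ⟨v, ⟨hvY, hvM⟩, rfl⟩
    exact ⟨v, hvY, hmG v hvM⟩
  have hYsplit : (Y ∩ M.verts).ncard + (Y \ M.verts).ncard = Y.ncard :=
    Set.ncard_inter_add_ncard_diff_eq_ncard Y M.verts (Set.toFinite _)
  have hYdiff : (Y \ M.verts).ncard ≤ M.vertsᶜ.ncard :=
    Set.ncard_le_ncard (fun x hx => hx.2) (Set.toFinite _)
  have hKE' : alpha G + mu G = Fintype.card V := hKE
  unfold dOn
  rw [Set.inter_univ, Set.inter_univ, hNS]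
  have h2 : Sᶜ.ncard = mu G := by omega
  have h3 : M.vertsᶜ.ncard + 2 * mu G = Fintype.card V := by omega
  -- goal: (Y.ncard : ℤ) - (nbhd G Y).ncard ≤ S.ncard - Sᶜ.ncard
  have := hNY
  have := hYsplit
  have := hYdiff
  omega

/-- In a KE graph, the maximum critical independent sets are exactly the
maximum independent sets. -/
lemma aux_family_eq {G : SimpleGraph V} (hKE : IsKE G) :
    {S : Set V | IsMaxCritIndepOn G Set.univ S} = {S : Set V | IsMaxIndep G S} := by
  obtain ⟨S₀, hS₀, hS₀card⟩ := aux_exists_max_indep G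
  have hS₀crit : IsCritIndep G S₀ := aux_max_indep_isCrit hKE hS₀
  ext T
  simp only [Set.mem_setOf_eq]
  constructor
  · rintro ⟨hTcrit, hTmax⟩
    have hTle : T.ncard ≤ alpha G := aux_indep_le_alpha G hTcrit.2.1
    have hTge : alpha G ≤ T.ncard := hS₀card ▸ hTmax S₀ hS₀crit
    exact ⟨Set.subset_univ T, hTcrit.2.1,
      fun T' _ hT' => le_trans (aux_indep_le_alpha G hT') hTge⟩
  · intro hT
    have hTcard : T.ncard = alpha G := aux_max_indep_card G hT
    refine ⟨aux_max_indep_isCrit hKE hT, fun T' hT' => ?_⟩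
    rw [hTcard]
    exact aux_indep_le_alpha G hT'.2.1

/-- If `G` is König-Egerváry, then `|nucleus(G)| + |diadem(G)| = 2α(G)`. -/
theorem stmt11 (G : SimpleGraph V) (hKE : IsKE G) :
    (nucleus G).ncard + (diadem G).ncard = 2 * alpha G := by
  classical
  obtain ⟨M, hM, hMcard⟩ := aux_exists_max_matching G
  obtain ⟨m, hm1, hm2⟩ := aux_exists_mate hM
  have hminv : ∀ v ∈ M.verts, m (m v) = v := fun v hv => hm2 _ _ (hm1 v hv).symm
  have hmmem : ∀ v ∈ M.verts, m v ∈ M.verts := fun v hv => M.edge_vert (hm1 v hv).symm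
  have hminj : Set.InjOn m M.verts := by
    intro v hv w hw hvw
    rw [← hminv v hv, hvw, hminv w hw]
  obtain ⟨S₀, hS₀, hS₀card⟩ := aux_exists_max_indep G
  have hnuc : nucleus G = ⋂₀ {S : Set V | IsMaxIndep G S} := by
    unfold nucleus nucleusOn
    rw [aux_family_eq hKE]
  have hdia : diadem G = ⋃₀ {S : Set V | IsMaxIndep G S} := by
    unfold diadem diademOn
    rw [aux_family_eq hKE]
  set C := ⋂₀ {S : Set V | IsMaxIndep G S} with hC
  set D := ⋃₀ {S : Set V | IsMaxIndep G S} with hD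
  rw [hnuc, hdia]
  have hstr : ∀ S, IsMaxIndep G S → Sᶜ ⊆ M.verts ∧ ∀ v ∈ M.verts, (v ∈ S ↔ m v ∉ S) :=
    fun S hS => aux_structure hKE hM hMcard hm1 hm2 hS
  have hU_C : M.vertsᶜ ⊆ C := by
    intro v hv
    apply Set.mem_sInter.mpr
    intro S hS
    by_contra hvS
    exact hv ((hstr S hS).1 hvS)
  have hCS₀ : C ⊆ S₀ := fun v hv => Set.mem_sInter.mp hv S₀ hS₀
  have hS₀D : S₀ ⊆ D := fun v hv => ⟨S₀, hS₀, hv⟩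
  have hCD : C ⊆ D := subset_trans hCS₀ hS₀D
  have hCdiff : C \ M.verts = M.vertsᶜ :=
    subset_antisymm (fun v hv => hv.2) (fun v hv => ⟨hU_C hv, hv⟩)
  have hDdiff : D \ M.verts = M.vertsᶜ :=
    subset_antisymm (fun v hv => hv.2) (fun v hv => ⟨hCD (hU_C hv), hv⟩)
  have himg : m '' (C ∩ M.verts) = M.verts \ D := by
    ext w
    constructor
    · rintro ⟨v, ⟨hvC, hvM⟩, rfl⟩
      refine ⟨hmmem v hvM, ?_⟩
      rintro ⟨S, hS, hwS⟩
      have hvS : v ∈ S := Set.mem_sInter.mp hvC S hS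
      exact ((hstr S hS).2 v hvM).mp hvS hwS
    · rintro ⟨hwM, hwD⟩
      refine ⟨m w, ⟨?_, hmmem w hwM⟩, hminv w hwM⟩
      apply Set.mem_sInter.mpr
      intro S hS
      have hwS : w ∉ S := fun h => hwD ⟨S, hS, h⟩
      by_contra hmwS
      exact hwS (((hstr S hS).2 w hwM).mpr hmwS)
  have h1 : (C ∩ M.verts).ncard + (C \ M.verts).ncard = C.ncard :=
    Set.ncard_inter_add_ncard_diff_eq_ncard C M.verts (Set.toFinite _)
  have h2 : (D ∩ M.verts).ncard + (D \ M.verts).ncard = D.ncard :=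
    Set.ncard_inter_add_ncard_diff_eq_ncard D M.verts (Set.toFinite _)
  have h3 : (M.verts \ D).ncard = (C ∩ M.verts).ncard := by
    rw [← himg]
    exact Set.ncard_image_of_injOn (hminj.mono Set.inter_subset_right)
  have h4 : (M.verts ∩ D).ncard + (M.verts \ D).ncard = M.verts.ncard :=
    Set.ncard_inter_add_ncard_diff_eq_ncard M.verts D (Set.toFinite _)
  have h5 : (D ∩ M.verts).ncard = (M.verts ∩ D).ncard := by rw [Set.inter_comm]
  have hc2 : (C \ M.verts).ncard = M.vertsᶜ.ncard := by rw [hCdiff]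
  have hd2 : (D \ M.verts).ncard = M.vertsᶜ.ncard := by rw [hDdiff]
  have hverts : M.verts.ncard = 2 * mu G := by rw [aux_matching_verts_ncard hM, hMcard]
  have hcomplM : M.verts.ncard + M.vertsᶜ.ncard = Fintype.card V := by
    rw [Set.ncard_add_ncard_compl M.verts (Set.toFinite _) (Set.toFinite _)]
    exact Nat.card_eq_fintype_card
  have hKE' : alpha G + mu G = Fintype.card V := hKE
  omega
end

section
/- A finite simple graph G is König-Egerváry if and only if diadem(G) = corona(G). -/
open Set

variable {V : Type*} [Fintype V]

set_option linter.unusedSectionVars false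
set_option maxHeartbeats 1000000

section KEproof

variable {G : SimpleGraph V}

lemma KE_dG_eq (X : Set V) : dOn G Set.univ X = (X.ncard : ℤ) - ((nbhd G X).ncard : ℤ) := by
  simp [dOn, Set.inter_univ]

lemma KE_mem_nbhd {X : Set V} {v : V} : v ∈ nbhd G X ↔ ∃ u ∈ X, G.Adj u v := Iff.rfl

lemma KE_nbhd_mono {X Y : Set V} (h : X ⊆ Y) : nbhd G X ⊆ nbhd G Y := by
  rintro v ⟨u, hu, ha⟩; exact ⟨u, h hu, ha⟩

lemma KE_nbhd_union (X Y : Set V) : nbhd G (X ∪ Y) = nbhd G X ∪ nbhd G Y := by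
  ext v
  constructor
  · rintro ⟨u, hu | hu, ha⟩
    · exact Or.inl ⟨u, hu, ha⟩
    · exact Or.inr ⟨u, hu, ha⟩
  · rintro (⟨u, hu, ha⟩ | ⟨u, hu, ha⟩)
    · exact ⟨u, Or.inl hu, ha⟩
    · exact ⟨u, Or.inr hu, ha⟩

lemma KE_indep_inter_nbhd {S : Set V} (h : IsIndep G S) : S ∩ nbhd G S = ∅ := by
  ext v
  simp only [Set.mem_inter_iff, Set.mem_empty_iff_false, iff_false, not_and]
  rintro hv ⟨u, hu, ha⟩
  exact h u hu v hv ha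

lemma KE_indep_not_mem_nbhd {S : Set V} (h : IsIndep G S) {v : V} (hv : v ∈ S) :
    v ∉ nbhd G S := by
  intro hn
  have := KE_indep_inter_nbhd h
  exact absurd (Set.mem_inter hv hn) (by simp [this])

/-- Zhang: a critical independent set exists. -/
lemma KE_exists_crit : ∃ S : Set V, IsCritIndep G S := by
  obtain ⟨Y, hY⟩ := Finite.exists_max (fun X : Set V => dOn G Set.univ X)
  refine ⟨Y \ nbhd G Y, ?_⟩
  have hindep : IsIndep G (Y \ nbhd G Y) := by
    rintro u ⟨hu, hun⟩ v ⟨hv, hvn⟩ ha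
    exact hvn ⟨u, hu, ha⟩
  have hXcard : (Y \ nbhd G Y).ncard = Y.ncard - (Y ∩ nbhd G Y).ncard := by
    rw [show Y \ nbhd G Y = Y \ (Y ∩ nbhd G Y) from (Set.diff_self_inter).symm]
    exact Set.ncard_diff inter_subset_left (Set.toFinite _)
  have hsub : nbhd G (Y \ nbhd G Y) ⊆ nbhd G Y \ (Y ∩ nbhd G Y) := by
    rintro w ⟨x, ⟨hxY, hxn⟩, ha⟩
    refine ⟨⟨x, hxY, ha⟩, ?_⟩
    rintro ⟨hwY, -⟩
    exact hxn ⟨w, hwY, ha.symm⟩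
  have hNcard : (nbhd G (Y \ nbhd G Y)).ncard ≤ (nbhd G Y).ncard - (Y ∩ nbhd G Y).ncard := by
    calc (nbhd G (Y \ nbhd G Y)).ncard ≤ (nbhd G Y \ (Y ∩ nbhd G Y)).ncard :=
        Set.ncard_le_ncard hsub (Set.toFinite _)
    _ = (nbhd G Y).ncard - (Y ∩ nbhd G Y).ncard :=
        Set.ncard_diff (fun v hv => hv.2) (Set.toFinite _)
  have hge : dOn G Set.univ Y ≤ dOn G Set.univ (Y \ nbhd G Y) := by
    rw [KE_dG_eq, KE_dG_eq]
    have h1 : (Y ∩ nbhd G Y).ncard ≤ Y.ncard :=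
      Set.ncard_le_ncard inter_subset_left (Set.toFinite _)
    have h2 : (Y ∩ nbhd G Y).ncard ≤ (nbhd G Y).ncard :=
      Set.ncard_le_ncard (fun v hv => hv.2) (Set.toFinite _)
    have h3 := hNcard
    omega
  exact ⟨Set.subset_univ _, hindep, fun Z _ => le_trans (hY Z) hge⟩

lemma KE_exists_max_crit : ∃ S : Set V, IsMaxCritIndep G S := by
  obtain ⟨S0, hS0⟩ := KE_exists_crit (G := G)
  have : Nonempty {S : Set V // IsCritIndep G S} := ⟨⟨S0, hS0⟩⟩
  obtain ⟨⟨S, hS⟩, hmax⟩ := Finite.exists_max (fun S : {S : Set V // IsCritIndep G S} => S.1.ncard)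
  exact ⟨S, hS, fun T hT => hmax ⟨T, hT⟩⟩

end KEproof
section KEproof2

variable {G : SimpleGraph V}

lemma KE_indep_le_alpha {S : Set V} (h : IsIndep G S) : S.ncard ≤ alpha G := by
  apply le_csSup
  · refine ⟨Fintype.card V, ?_⟩
    rintro n ⟨T, -, -, rfl⟩
    simpa [Set.ncard_univ] using Set.ncard_le_ncard (Set.subset_univ T) (Set.toFinite _)
  · exact ⟨S, Set.subset_univ _, h, rfl⟩

lemma KE_exists_max_indep : ∃ S : Set V, IsMaxIndep G S ∧ S.ncard = alpha G := by
  have hmem : alpha G ∈ {n | ∃ S ⊆ (Set.univ : Set V), IsIndep G S ∧ S.ncard = n} := by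
    apply Nat.sSup_mem
    · exact ⟨0, ∅, by simp, fun u hu => by simp at hu, by simp⟩
    · refine ⟨Fintype.card V, ?_⟩
      rintro n ⟨T, -, -, rfl⟩
      simpa [Set.ncard_univ] using Set.ncard_le_ncard (Set.subset_univ T) (Set.toFinite _)
  obtain ⟨S, -, hind, hcard⟩ := hmem
  exact ⟨S, ⟨Set.subset_univ _, hind, fun T _ hT => hcard ▸ KE_indep_le_alpha hT⟩, hcard⟩

lemma KE_matching_le_mu {M : G.Subgraph} (h : M.IsMatching) : M.edgeSet.ncard ≤ mu G := by
  apply le_csSup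
  · refine ⟨Fintype.card (Sym2 V), ?_⟩
    rintro n ⟨M', -, rfl⟩
    simpa [Set.ncard_univ] using Set.ncard_le_ncard (Set.subset_univ M'.edgeSet) (Set.toFinite _)
  · exact ⟨M, h, rfl⟩

lemma KE_exists_max_matching : ∃ M : G.Subgraph, M.IsMatching ∧ M.edgeSet.ncard = mu G := by
  have hmem : mu G ∈ {n | ∃ M : G.Subgraph, M.IsMatching ∧ M.edgeSet.ncard = n} := by
    apply Nat.sSup_mem
    · exact ⟨0, ⊥, fun v hv => by simp [SimpleGraph.Subgraph.verts_bot] at hv, by simp⟩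
    · refine ⟨Fintype.card (Sym2 V), ?_⟩
      rintro n ⟨M', -, rfl⟩
      simpa [Set.ncard_univ] using Set.ncard_le_ncard (Set.subset_univ M'.edgeSet) (Set.toFinite _)
  exact hmem

/-- Each vertex of a matching determines its unique partner. -/
lemma KE_partner {M : G.Subgraph} (h : M.IsMatching) :
    ∃ p : V → V, (∀ v ∈ M.verts, M.Adj v (p v)) ∧
      (∀ v ∈ M.verts, ∀ y, M.Adj v y → y = p v) := by
  have : ∀ v, v ∈ M.verts → ∃ w, M.Adj v w ∧ ∀ y, M.Adj v y → y = w := by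
    intro v hv
    obtain ⟨w, hw1, hw2⟩ := h hv
    exact ⟨w, hw1, hw2⟩
  choose! p hp1 hp2 using this
  exact ⟨p, hp1, hp2⟩

lemma KE_matching_verts_ncard {M : G.Subgraph} (h : M.IsMatching) :
    M.verts.ncard = 2 * M.edgeSet.ncard := by
  obtain ⟨p, hp1, hp2⟩ := KE_partner h
  classical
  have hout_eq : ∀ e : Sym2 V, s(e.out.1, e.out.2) = e := fun e => by
    rw [Sym2.mk, Prod.mk.eta, e.out_eq]
  have huniq : ∀ v ∈ M.verts, ∀ e ∈ M.edgeSet, v ∈ e → e = s(v, p v) := by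
    intro v hv e he hve
    obtain ⟨w, rfl⟩ := Sym2.mem_iff_exists.mp hve
    rw [SimpleGraph.Subgraph.mem_edgeSet] at he
    rw [hp2 v hv w he]
  have hmemvert : ∀ e ∈ M.edgeSet, ∀ v ∈ e, v ∈ M.verts := by
    intro e he v hv
    obtain ⟨w, rfl⟩ := Sym2.mem_iff_exists.mp hv
    exact M.edge_vert (SimpleGraph.Subgraph.mem_edgeSet.mp he)
  have hndiag : ∀ e ∈ M.edgeSet, e.out.1 ≠ e.out.2 := by
    intro e he heq
    have : e.IsDiag := by
      rw [← hout_eq e, Sym2.mk_isDiag_iff]; exact heq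
    exact G.not_isDiag_of_mem_edgeSet (M.edgeSet_subset he) this
  let F : M.edgeSet × Bool → M.verts := fun x =>
    if x.2 then ⟨x.1.1.out.1, hmemvert _ x.1.2 _ (Sym2.out_fst_mem _)⟩
    else ⟨x.1.1.out.2, hmemvert _ x.1.2 _ (Sym2.out_snd_mem _)⟩
  have hFval : ∀ x : M.edgeSet × Bool, (F x).1 ∈ x.1.1 := by
    rintro ⟨e, b⟩
    cases b
    · exact Sym2.out_snd_mem _
    · exact Sym2.out_fst_mem _
  have hbij : Function.Bijective F := by
    constructor
    · rintro ⟨e, b⟩ ⟨e', b'⟩ heq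
      have hval : (F (e, b)).1 = (F (e', b')).1 := by rw [heq]
      have h1 : (F (e, b)).1 ∈ e.1 := hFval (e, b)
      have h2 : (F (e, b)).1 ∈ e'.1 := hval ▸ hFval (e', b')
      have hv : (F (e, b)).1 ∈ M.verts := (F (e, b)).2
      have hee' : e = e' := Subtype.ext <|
        (huniq _ hv _ e.2 h1).trans (huniq _ hv _ e'.2 h2).symm
      subst hee'
      have hbb' : b = b' := by
        by_contra hne
        have : e.1.out.1 = e.1.out.2 := by
          cases b <;> cases b' <;> simp_all [F]
        exact hndiag _ e.2 this
      rw [hbb']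
    · rintro ⟨v, hv⟩
      have he : s(v, p v) ∈ M.edgeSet := SimpleGraph.Subgraph.mem_edgeSet.mpr (hp1 v hv)
      have hvm : v ∈ s(v, p v) := Sym2.mem_mk_left _ _
      rw [← hout_eq s(v, p v)] at hvm
      rcases Sym2.mem_iff.mp hvm with h1 | h2
      · exact ⟨(⟨s(v, p v), he⟩, true), Subtype.ext h1.symm⟩
      · exact ⟨(⟨s(v, p v), he⟩, false), Subtype.ext h2.symm⟩
  have := Nat.card_eq_of_bijective F hbij
  rw [Nat.card_prod, Nat.card_eq_fintype_card (α := Bool), Fintype.card_bool,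
    Nat.card_coe_set_eq, Nat.card_coe_set_eq] at this
  omega

end KEproof2
section KEproof3

variable {G : SimpleGraph V}

/-- For every set `Y`, `d(Y) ≤ |V| - 2μ`. -/
lemma KE_d_le_card_sub_two_mu (Y : Set V) :
    dOn G Set.univ Y ≤ (Fintype.card V : ℤ) - 2 * (mu G : ℤ) := by
  obtain ⟨M, hM, hMcard⟩ := KE_exists_max_matching (G := G)
  obtain ⟨p, hp1, hp2⟩ := KE_partner hM
  -- |Y ∩ M.verts| ≤ |nbhd G Y| via the partner injection
  have hinj : Set.InjOn p (Y ∩ M.verts) := by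
    rintro v₁ ⟨hv₁Y, hv₁M⟩ v₂ ⟨hv₂Y, hv₂M⟩ heq
    have h1 : M.Adj v₁ (p v₁) := hp1 v₁ hv₁M
    have h2 : M.Adj v₂ (p v₂) := hp1 v₂ hv₂M
    rw [heq] at h1
    have hw : p v₂ ∈ M.verts := M.edge_vert h2.symm
    have e1 := hp2 (p v₂) hw v₁ h1.symm
    have e2 := hp2 (p v₂) hw v₂ h2.symm
    exact e1.trans e2.symm
  have hmaps : ∀ v ∈ Y ∩ M.verts, p v ∈ nbhd G Y := by
    rintro v ⟨hvY, hvM⟩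
    exact ⟨v, hvY, M.adj_sub (hp1 v hvM)⟩
  have hcard1 : (Y ∩ M.verts).ncard ≤ (nbhd G Y).ncard :=
    Set.ncard_le_ncard_of_injOn p hmaps hinj (Set.toFinite _)
  have hcard2 : (Y ∪ M.verts).ncard + (Y ∩ M.verts).ncard = Y.ncard + M.verts.ncard :=
    Set.ncard_union_add_ncard_inter Y M.verts
  have hcard3 : (Y ∪ M.verts).ncard ≤ Fintype.card V := by
    simpa [Set.ncard_univ] using Set.ncard_le_ncard (Set.subset_univ (Y ∪ M.verts)) (Set.toFinite _)
  have hverts : M.verts.ncard = 2 * M.edgeSet.ncard := KE_matching_verts_ncard hM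
  rw [KE_dG_eq]
  have := hMcard
  omega

/-- For an independent set `S` and any matching, `μ + |S| ≤ |V|`. -/
lemma KE_mu_add_indep_le {S : Set V} (hS : IsIndep G S) :
    mu G + S.ncard ≤ Fintype.card V := by
  obtain ⟨M, hM, hMcard⟩ := KE_exists_max_matching (G := G)
  classical
  cases isEmpty_or_nonempty V with
  | inl hemp =>
    have h1 : S = ∅ := Set.eq_empty_of_isEmpty S
    have h2 : M.edgeSet = ∅ := Set.eq_empty_of_isEmpty _
    simp [h1, h2] at hMcard ⊢
    omega
  | inr hne =>
    have hexists : ∀ e ∈ M.edgeSet, ∃ v, v ∈ e ∧ v ∉ S := by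
      intro e he
      induction e with
      | _ x y =>
        rw [SimpleGraph.Subgraph.mem_edgeSet] at he
        by_cases hx : x ∈ S
        · by_cases hy : y ∈ S
          · exact absurd (M.adj_sub he) (hS x hx y hy)
          · exact ⟨y, Sym2.mem_mk_right _ _, hy⟩
        · exact ⟨x, Sym2.mem_mk_left _ _, hx⟩
    choose! g hg1 hg2 using hexists
    obtain ⟨p, hp1, hp2⟩ := KE_partner hM
    have huniq : ∀ v ∈ M.verts, ∀ e ∈ M.edgeSet, v ∈ e → e = s(v, p v) := by
      intro v hv e he hve
      obtain ⟨w, rfl⟩ := Sym2.mem_iff_exists.mp hve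
      rw [SimpleGraph.Subgraph.mem_edgeSet] at he
      rw [hp2 v hv w he]
    have hinj : Set.InjOn g M.edgeSet := by
      intro e he e' he' heq
      have h1 : g e ∈ e := hg1 e he
      have h2 : g e ∈ e' := heq ▸ hg1 e' he'
      have hv : g e ∈ M.verts := by
        obtain ⟨w, hw⟩ := Sym2.mem_iff_exists.mp h1
        exact M.edge_vert (SimpleGraph.Subgraph.mem_edgeSet.mp (hw ▸ he))
      exact (huniq _ hv _ he h1).trans (huniq _ hv _ he' h2).symm
    have hmaps : ∀ e ∈ M.edgeSet, g e ∈ Sᶜ := fun e he => hg2 e he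
    have hcard : M.edgeSet.ncard ≤ Sᶜ.ncard :=
      Set.ncard_le_ncard_of_injOn g hmaps hinj (Set.toFinite _)
    have hcompl : S.ncard + Sᶜ.ncard = Fintype.card V := by
      have : (Set.univ : Set V).ncard = Fintype.card V := by
        rw [Set.ncard_univ, Nat.card_eq_fintype_card]
      rw [← this, ← Set.ncard_union_eq disjoint_compl_right (Set.toFinite _) (Set.toFinite _),
        Set.union_compl_self]
    omega

end KEproof3
section KEproof4

variable {G : SimpleGraph V}

/-- Hall-type matching from `N(S)` into `S` for a critical independent set `S`. -/
lemma KE_hall {S : Set V} (hS : IsCritIndep G S) :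
    ∃ f : V → V, Set.InjOn f (nbhd G S) ∧ ∀ v ∈ nbhd G S, f v ∈ S ∧ G.Adj v (f v) := by
  classical
  haveI : Fintype ↥(nbhd G S) := Fintype.ofFinite _
  set t : ↥(nbhd G S) → Finset V :=
    fun v => Set.Finite.toFinset (Set.toFinite {w | w ∈ S ∧ G.Adj v.1 w}) with ht
  have hhall : ∀ A : Finset ↥(nbhd G S), A.card ≤ (A.biUnion t).card := by
    intro A
    set T : Set V := ↑(A.image Subtype.val) with hT
    have hTsub : T ⊆ nbhd G S := by
      rintro v hv
      simp only [hT, Finset.coe_image, Set.mem_image, Finset.mem_coe] at hv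
      obtain ⟨⟨u, hu⟩, -, rfl⟩ := hv
      exact hu
    have hbi : ((A.biUnion t : Finset V) : Set V) = S ∩ nbhd G T := by
      ext w
      simp only [Finset.coe_biUnion, Set.mem_iUnion, Finset.mem_coe, Set.Finite.mem_toFinset,
        Set.mem_setOf_eq, Set.mem_inter_iff, ht]
      constructor
      · rintro ⟨v, hvA, hwS, hadj⟩
        refine ⟨hwS, v.1, ?_, hadj⟩
        simp only [hT, Finset.coe_image, Set.mem_image, Finset.mem_coe]
        exact ⟨v, hvA, rfl⟩
      · rintro ⟨hwS, u, huT, hadj⟩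
        simp only [hT, Finset.coe_image, Set.mem_image, Finset.mem_coe] at huT
        obtain ⟨v, hvA, rfl⟩ := huT
        exact ⟨v, hvA, hwS, hadj⟩
    -- criticality gives |T| ≤ |S ∩ nbhd T|
    have hd := hS.2.2 (S \ nbhd G T) (Set.subset_univ _)
    rw [KE_dG_eq, KE_dG_eq] at hd
    have hY1 : (S \ nbhd G T).ncard = S.ncard - (S ∩ nbhd G T).ncard := by
      rw [show S \ nbhd G T = S \ (S ∩ nbhd G T) from (Set.diff_self_inter).symm]
      exact Set.ncard_diff Set.inter_subset_left (Set.toFinite _)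
    have hY2 : nbhd G (S \ nbhd G T) ⊆ nbhd G S \ T := by
      rintro w ⟨y, ⟨hyS, hyn⟩, hadj⟩
      refine ⟨⟨y, hyS, hadj⟩, fun hwT => hyn ⟨w, hwT, hadj.symm⟩⟩
    have hY3 : (nbhd G (S \ nbhd G T)).ncard ≤ (nbhd G S).ncard - T.ncard := by
      calc (nbhd G (S \ nbhd G T)).ncard ≤ (nbhd G S \ T).ncard :=
          Set.ncard_le_ncard hY2 (Set.toFinite _)
        _ = (nbhd G S).ncard - T.ncard := Set.ncard_diff hTsub (Set.toFinite _)
    have hle1 : (S ∩ nbhd G T).ncard ≤ S.ncard :=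
      Set.ncard_le_ncard Set.inter_subset_left (Set.toFinite _)
    have hle2 : T.ncard ≤ (nbhd G S).ncard := Set.ncard_le_ncard hTsub (Set.toFinite _)
    have hkey : T.ncard ≤ (S ∩ nbhd G T).ncard := by omega
    have hc1 : A.card = T.ncard := by
      rw [hT, Set.ncard_coe_finset, Finset.card_image_of_injective _ Subtype.val_injective]
    have hc2 : (A.biUnion t).card = (S ∩ nbhd G T).ncard := by
      rw [← Set.ncard_coe_finset, hbi]
    omega
  obtain ⟨f₀, hf₀inj, hf₀mem⟩ := (Finset.all_card_le_biUnion_card_iff_exists_injective t).mp hhall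
  refine ⟨fun v => if h : v ∈ nbhd G S then f₀ ⟨v, h⟩ else v, ?_, ?_⟩
  · intro v₁ h₁ v₂ h₂ heq
    simp only [dif_pos h₁, dif_pos h₂] at heq
    exact congrArg Subtype.val (hf₀inj heq)
  · intro v hv
    simp only [dif_pos hv]
    have := hf₀mem ⟨v, hv⟩
    simp only [ht, Set.Finite.mem_toFinset, Set.mem_setOf_eq] at this
    exact this

end KEproof4
section KEproof5

variable {G : SimpleGraph V}

/-- Any independent subset of `S ∪ N(S)` has size at most `|S|` when `S` is critical. -/
lemma KE_indep_in_closed_nbhd_le {S J : Set V} (hS : IsCritIndep G S) (hJ : IsIndep G J)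
    (hJ2 : J ⊆ S ∪ nbhd G S) : J.ncard ≤ S.ncard := by
  obtain ⟨f, hfinj, hf⟩ := KE_hall hS
  have hdisj : Disjoint (J ∩ S) (J ∩ nbhd G S) := by
    rw [Set.disjoint_left]
    rintro v ⟨-, hvS⟩ ⟨-, hvN⟩
    exact KE_indep_not_mem_nbhd hS.2.1 hvS hvN
  have hsplit : J = (J ∩ S) ∪ (J ∩ nbhd G S) := by
    rw [← Set.inter_union_distrib_left]
    exact (Set.inter_eq_left.mpr hJ2).symm
  have hcard : J.ncard = (J ∩ S).ncard + (J ∩ nbhd G S).ncard := by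
    conv_lhs => rw [hsplit]
    exact Set.ncard_union_eq hdisj (Set.toFinite _) (Set.toFinite _)
  have hmap : ∀ v ∈ J ∩ nbhd G S, f v ∈ S \ J := by
    rintro v ⟨hvJ, hvN⟩
    obtain ⟨hfS, hadj⟩ := hf v hvN
    refine ⟨hfS, fun hfJ => hJ v hvJ (f v) hfJ hadj⟩
  have h1 : (J ∩ nbhd G S).ncard ≤ (S \ J).ncard :=
    Set.ncard_le_ncard_of_injOn f hmap (hfinj.mono Set.inter_subset_right) (Set.toFinite _)
  have h2 : (S \ J).ncard = S.ncard - (S ∩ J).ncard := by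
    rw [show S \ J = S \ (S ∩ J) from (Set.diff_self_inter).symm]
    exact Set.ncard_diff Set.inter_subset_left (Set.toFinite _)
  have h3 : (S ∩ J).ncard = (J ∩ S).ncard := by rw [Set.inter_comm]
  have h4 : (S ∩ J).ncard ≤ S.ncard := Set.ncard_le_ncard Set.inter_subset_left (Set.toFinite _)
  omega

/-- Larson: a critical maximum independent set forces König-Egerváry. -/
lemma KE_of_crit_max_indep {S : Set V} (hS : IsCritIndep G S) (hmax : IsMaxIndep G S) :
    IsKE G := by
  classical
  have halpha : S.ncard = alpha G := by
    obtain ⟨S₀, hS₀, hS₀card⟩ := KE_exists_max_indep (G := G)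
    have h1 := hmax.2.2 S₀ (Set.subset_univ _) hS₀.2.1
    have h2 := KE_indep_le_alpha hS.2.1 (G := G)
    omega
  -- every vertex outside S is in N(S)
  have hcompl : Sᶜ ⊆ nbhd G S := by
    intro v hv
    by_contra hvn
    have hins : IsIndep G (insert v S) := by
      rintro u hu w hw hadj
      rcases Set.mem_insert_iff.mp hu with rfl | huS
      · rcases Set.mem_insert_iff.mp hw with rfl | hwS
        · exact G.irrefl hadj
        · exact hvn ⟨w, hwS, hadj.symm⟩
      · rcases Set.mem_insert_iff.mp hw with rfl | hwS
        · exact hvn ⟨u, huS, hadj⟩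
        · exact hmax.2.1 u huS w hwS hadj
    have := hmax.2.2 (insert v S) (Set.subset_univ _) hins
    rw [Set.ncard_insert_of_notMem hv (Set.toFinite _)] at this
    omega
  have hNS : nbhd G S = Sᶜ := by
    apply Set.Subset.antisymm _ hcompl
    intro v hv
    exact fun hvS => KE_indep_not_mem_nbhd hS.2.1 hvS hv
  -- build a matching of size |Sᶜ|
  obtain ⟨f, hfinj, hf⟩ := KE_hall hS
  rw [hNS] at hfinj hf
  set M : G.Subgraph :=
    { verts := Sᶜ ∪ f '' Sᶜ
      Adj := fun x y => (x ∈ Sᶜ ∧ y = f x) ∨ (y ∈ Sᶜ ∧ x = f y)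
      adj_sub := by
        rintro x y (⟨hx, rfl⟩ | ⟨hy, rfl⟩)
        · exact (hf x hx).2
        · exact (hf y hy).2.symm
      edge_vert := by
        rintro x y (⟨hx, rfl⟩ | ⟨hy, rfl⟩)
        · exact Or.inl hx
        · exact Or.inr ⟨y, hy, rfl⟩
      symm := by
        constructor
        rintro x y (⟨hx, rfl⟩ | ⟨hy, rfl⟩)
        · exact Or.inr ⟨hx, rfl⟩
        · exact Or.inl ⟨hy, rfl⟩ } with hM
  have hfS : ∀ v ∈ Sᶜ, f v ∈ S := fun v hv => (hf v hv).1
  have hMmatch : M.IsMatching := by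
    rintro v (hv | ⟨u, hu, rfl⟩)
    · refine ⟨f v, Or.inl ⟨hv, rfl⟩, ?_⟩
      rintro y (⟨-, rfl⟩ | ⟨hy, rfl⟩)
      · rfl
      · exact absurd (hfS y hy) hv
    · refine ⟨u, Or.inr ⟨hu, rfl⟩, ?_⟩
      rintro y (⟨hfu, -⟩ | ⟨hy, heq⟩)
      · exact absurd (hfS u hu) hfu
      · exact hfinj hy hu heq.symm
  have hedge : M.edgeSet = (fun v => s(v, f v)) '' Sᶜ := by
    ext e
    induction e with
    | _ x y =>
      simp only [SimpleGraph.Subgraph.mem_edgeSet, Set.mem_image]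
      constructor
      · rintro (⟨hx, rfl⟩ | ⟨hy, rfl⟩)
        · exact ⟨x, hx, rfl⟩
        · exact ⟨y, hy, Sym2.eq_swap⟩
      · rintro ⟨v, hv, hveq⟩
        rcases Sym2.eq_iff.mp hveq with ⟨rfl, rfl⟩ | ⟨rfl, rfl⟩
        · exact Or.inl ⟨hv, rfl⟩
        · exact Or.inr ⟨hv, rfl⟩
  have hedgecard : M.edgeSet.ncard = Sᶜ.ncard := by
    rw [hedge]
    apply Set.ncard_image_of_injOn
    intro v hv v' hv' heq
    rcases Sym2.eq_iff.mp heq with ⟨h1, -⟩ | ⟨h1, -⟩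
    · exact h1
    · exact absurd (h1 ▸ hfS v' hv') hv
  have hmu_ge : Sᶜ.ncard ≤ mu G := hedgecard ▸ KE_matching_le_mu hMmatch
  have hmu_le := KE_mu_add_indep_le hS.2.1 (G := G)
  have hcompl' : S.ncard + Sᶜ.ncard = Fintype.card V := by
    have : (Set.univ : Set V).ncard = Fintype.card V := by
      rw [Set.ncard_univ, Nat.card_eq_fintype_card]
    rw [← this, ← Set.ncard_union_eq disjoint_compl_right (Set.toFinite _) (Set.toFinite _),
      Set.union_compl_self]
  unfold IsKE
  omega

end KEproof5
section KEproof6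

variable {G : SimpleGraph V}

lemma KE_card_univ : (Set.univ : Set V).ncard = Fintype.card V := by
  rw [Set.ncard_univ, Nat.card_eq_fintype_card]

lemma KE_max_indep_card {S : Set V} (hS : IsMaxIndep G S) : S.ncard = alpha G := by
  obtain ⟨S₀, hS₀, hS₀card⟩ := KE_exists_max_indep (G := G)
  have h1 := hS.2.2 S₀ (Set.subset_univ _) hS₀.2.1
  have h2 := KE_indep_le_alpha hS.2.1 (G := G)
  omega

/-- In a KE graph, maximum independent sets and maximum critical independent sets coincide. -/
lemma KE_families_eq (hKE : IsKE G) :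
    {S : Set V | IsMaxCritIndep G S} = {S : Set V | IsMaxIndep G S} := by
  unfold IsKE at hKE
  have hcrit_of_max : ∀ S : Set V, IsMaxIndep G S → IsCritIndep G S := by
    intro S hS
    refine ⟨Set.subset_univ _, hS.2.1, fun Y _ => ?_⟩
    have h1 := KE_d_le_card_sub_two_mu (G := G) Y
    have hcard : S.ncard = alpha G := KE_max_indep_card hS
    have hsub : nbhd G S ⊆ Sᶜ := fun v hv hvS => KE_indep_not_mem_nbhd hS.2.1 hvS hv
    have hle : (nbhd G S).ncard ≤ Sᶜ.ncard := Set.ncard_le_ncard hsub (Set.toFinite _)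
    have hcompl : S.ncard + Sᶜ.ncard = Fintype.card V := by
      rw [← KE_card_univ (V := V),
        ← Set.ncard_union_eq disjoint_compl_right (Set.toFinite _) (Set.toFinite _),
        Set.union_compl_self]
    rw [KE_dG_eq Y] at h1
    rw [KE_dG_eq Y, KE_dG_eq S]
    omega
  ext S
  simp only [Set.mem_setOf_eq]
  constructor
  · rintro ⟨hcrit, hmax⟩
    obtain ⟨S₀, hS₀, hS₀card⟩ := KE_exists_max_indep (G := G)
    have hS₀crit : IsCritIndep G S₀ := hcrit_of_max S₀ hS₀
    have h1 : alpha G ≤ S.ncard := hS₀card ▸ hmax S₀ hS₀crit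
    have h2 : S.ncard ≤ alpha G := KE_indep_le_alpha hcrit.2.1
    refine ⟨Set.subset_univ _, hcrit.2.1, fun T _ hT => ?_⟩
    have := KE_indep_le_alpha hT (G := G)
    omega
  · intro hS
    refine ⟨hcrit_of_max S hS, fun T hT => ?_⟩
    have h1 := KE_indep_le_alpha hT.2.1 (G := G)
    have h2 : S.ncard = alpha G := KE_max_indep_card hS
    omega

/-- Any maximum critical independent set is contained in `S ∪ N(S)` for any other one. -/
lemma KE_maxcrit_subset {S T : Set V} (hS : IsMaxCritIndep G S) (hT : IsMaxCritIndep G T) :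
    T ⊆ S ∪ nbhd G S := by
  classical
  obtain ⟨f, hfinj, hf⟩ := KE_hall hS.1
  set T' := T \ (S ∪ nbhd G S) with hT'
  set U := S ∪ T' with hU
  have hScrit := hS.1
  have hTcrit := hT.1
  have hdeq : dOn G Set.univ T = dOn G Set.univ S :=
    le_antisymm (hScrit.2.2 T (Set.subset_univ _)) (hTcrit.2.2 S (Set.subset_univ _))
  -- U is independent
  have hUind : IsIndep G U := by
    rintro u (huS | huT') w (hwS | hwT') hadj
    · exact hScrit.2.1 u huS w hwS hadj
    · exact hwT'.2 (Or.inr ⟨u, huS, hadj⟩)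
    · exact huT'.2 (Or.inr ⟨w, hwS, hadj.symm⟩)
    · exact hTcrit.2.1 u huT'.1 w hwT'.1 hadj
  -- d(S∪T) ≥ d(S)
  have hsup : dOn G Set.univ S ≤ dOn G Set.univ (S ∪ T) := by
    have e1 : (S ∪ T).ncard + (S ∩ T).ncard = S.ncard + T.ncard :=
      Set.ncard_union_add_ncard_inter S T
    have e3 : (nbhd G S ∪ nbhd G T).ncard + (nbhd G S ∩ nbhd G T).ncard = (nbhd G S).ncard + (nbhd G T).ncard :=
      Set.ncard_union_add_ncard_inter (nbhd G S) (nbhd G T)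
    have e4 : (nbhd G (S ∩ T)).ncard ≤ (nbhd G S ∩ nbhd G T).ncard :=
      Set.ncard_le_ncard (Set.subset_inter
        (KE_nbhd_mono Set.inter_subset_left) (KE_nbhd_mono Set.inter_subset_right))
        (Set.toFinite _)
    have e5 : dOn G Set.univ (S ∩ T) ≤ dOn G Set.univ S := hScrit.2.2 _ (Set.subset_univ _)
    have d1 := KE_dG_eq (G := G) S
    have d2 := KE_dG_eq (G := G) T
    have d3 : dOn G Set.univ (S ∪ T) = (((S ∪ T).ncard : ℤ)) - (((nbhd G S ∪ nbhd G T).ncard : ℤ)) := by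
      rw [KE_dG_eq, KE_nbhd_union]
    have d4 := KE_dG_eq (G := G) (S ∩ T)
    omega
  -- d(U) ≥ d(S∪T)
  have hU_ge : dOn G Set.univ (S ∪ T) ≤ dOn G Set.univ U := by
    have split1 : S ∪ T = U ∪ (T ∩ nbhd G S) := by
      ext x
      constructor
      · rintro (hxS | hxT)
        · exact Or.inl (Or.inl hxS)
        · by_cases hxS' : x ∈ S
          · exact Or.inl (Or.inl hxS')
          · by_cases hxNS : x ∈ nbhd G S
            · exact Or.inr ⟨hxT, hxNS⟩
            · exact Or.inl (Or.inr ⟨hxT, fun hc => hc.elim hxS' hxNS⟩)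
      · rintro (hxU | ⟨hxT, -⟩)
        · rcases hxU with hxS | hxT'
          · exact Or.inl hxS
          · exact Or.inr hxT'.1
        · exact Or.inr hxT
    have hdisj1 : Disjoint U (T ∩ nbhd G S) := by
      rw [Set.disjoint_left]
      rintro x (hxS | hxT') ⟨-, hxNS⟩
      · exact KE_indep_not_mem_nbhd hScrit.2.1 hxS hxNS
      · exact hxT'.2 (Or.inr hxNS)
    have c1 : (S ∪ T).ncard = U.ncard + (T ∩ nbhd G S).ncard := by
      rw [split1]
      exact Set.ncard_union_eq hdisj1 (Set.toFinite _) (Set.toFinite _)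
    have sub2 : nbhd G U ⊆ (nbhd G S ∪ nbhd G T) \ (S ∩ nbhd G T) := by
      rintro x ⟨u, huU, hadj⟩
      constructor
      · rcases huU with huS | huT'
        · exact Or.inl ⟨u, huS, hadj⟩
        · exact Or.inr ⟨u, huT'.1, hadj⟩
      · rintro ⟨hxS, -⟩
        rcases huU with huS | huT'
        · exact KE_indep_not_mem_nbhd hScrit.2.1 hxS ⟨u, huS, hadj⟩
        · exact huT'.2 (Or.inr ⟨x, hxS, hadj.symm⟩)
    have hSNTsub : S ∩ nbhd G T ⊆ nbhd G S ∪ nbhd G T := fun x hx => Or.inr hx.2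
    have c2 : (nbhd G U).ncard ≤ (nbhd G S ∪ nbhd G T).ncard - (S ∩ nbhd G T).ncard := by
      calc (nbhd G U).ncard ≤ ((nbhd G S ∪ nbhd G T) \ (S ∩ nbhd G T)).ncard :=
            Set.ncard_le_ncard sub2 (Set.toFinite _)
        _ = (nbhd G S ∪ nbhd G T).ncard - (S ∩ nbhd G T).ncard := Set.ncard_diff hSNTsub (Set.toFinite _)
    have c3 : (T ∩ nbhd G S).ncard ≤ (S ∩ nbhd G T).ncard := by
      apply Set.ncard_le_ncard_of_injOn f
      · rintro t ⟨htT, htNS⟩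
        exact ⟨(hf t htNS).1, t, htT, (hf t htNS).2⟩
      · exact hfinj.mono Set.inter_subset_right
    have c4 : (S ∩ nbhd G T).ncard ≤ (nbhd G S ∪ nbhd G T).ncard :=
      Set.ncard_le_ncard hSNTsub (Set.toFinite _)
    rw [KE_dG_eq, KE_dG_eq, KE_nbhd_union]
    omega
  -- U is a critical independent set, hence at most |S|
  have hUcrit : IsCritIndep G U :=
    ⟨Set.subset_univ _, hUind, fun Y hY =>
      le_trans (hScrit.2.2 Y hY) (le_trans hsup hU_ge)⟩
  have hle := hS.2 U hUcrit
  have hdisjSU : Disjoint S T' := by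
    rw [Set.disjoint_left]
    rintro x hxS hxT'
    exact hxT'.2 (Or.inl hxS)
  have hcard : U.ncard = S.ncard + T'.ncard :=
    Set.ncard_union_eq hdisjSU (Set.toFinite _) (Set.toFinite _)
  have hT'empty : T' = ∅ := by
    rw [← Set.ncard_eq_zero (Set.toFinite _)]
    omega
  intro t ht
  by_contra hc
  have : t ∈ T' := ⟨ht, hc⟩
  rw [hT'empty] at this
  exact this

end KEproof6
/-- `G` is König-Egerváry iff `diadem(G) = corona(G)`. -/
theorem stmt12 (G : SimpleGraph V) : IsKE G ↔ diadem G = corona G := by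
  constructor
  · intro hKE
    have h := KE_families_eq hKE
    unfold diadem diademOn corona
    rw [show {S | IsMaxCritIndepOn G Set.univ S} = {S : Set V | IsMaxCritIndep G S} from rfl, h]
  · intro h
    classical
    obtain ⟨S, hS⟩ := KE_exists_max_crit (G := G)
    haveI : Nonempty {J : Set V // J ⊆ (S ∪ nbhd G S)ᶜ ∧ IsIndep G J} :=
      ⟨⟨∅, Set.empty_subset _, fun u hu => absurd hu (Set.notMem_empty u)⟩⟩
    obtain ⟨⟨J, hJR, hJind⟩, hJmax⟩ :=
      Finite.exists_max (fun J : {J : Set V // J ⊆ (S ∪ nbhd G S)ᶜ ∧ IsIndep G J} => J.1.ncard)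
    have hdisj : Disjoint S J := by
      rw [Set.disjoint_left]
      intro v hvS hvJ
      exact hJR hvJ (Or.inl hvS)
    have hSJind : IsIndep G (S ∪ J) := by
      rintro u (huS | huJ) w (hwS | hwJ) hadj
      · exact hS.1.2.1 u huS w hwS hadj
      · exact hJR hwJ (Or.inr ⟨u, huS, hadj⟩)
      · exact hJR huJ (Or.inr ⟨w, hwS, hadj.symm⟩)
      · exact hJind u huJ w hwJ hadj
    have hSJmax : IsMaxIndep G (S ∪ J) := by
      refine ⟨Set.subset_univ _, hSJind, fun T _ hT => ?_⟩
      have h1 : (T ∩ (S ∪ nbhd G S)).ncard ≤ S.ncard :=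
        KE_indep_in_closed_nbhd_le hS.1 (fun u hu w hw => hT u hu.1 w hw.1)
          Set.inter_subset_right
      have h2 : (T ∩ (S ∪ nbhd G S)ᶜ).ncard ≤ J.ncard :=
        hJmax ⟨T ∩ (S ∪ nbhd G S)ᶜ, Set.inter_subset_right,
          fun u hu w hw => hT u hu.1 w hw.1⟩
      have hdisjT : Disjoint (T ∩ (S ∪ nbhd G S)) (T ∩ (S ∪ nbhd G S)ᶜ) := by
        rw [Set.disjoint_left]
        rintro v ⟨-, hv1⟩ ⟨-, hv2⟩
        exact hv2 hv1
      have hsplit : T.ncard = (T ∩ (S ∪ nbhd G S)).ncard + (T ∩ (S ∪ nbhd G S)ᶜ).ncard := by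
        conv_lhs => rw [← Set.inter_union_compl T (S ∪ nbhd G S)]
        exact Set.ncard_union_eq hdisjT (Set.toFinite _) (Set.toFinite _)
      have hSJ : (S ∪ J).ncard = S.ncard + J.ncard :=
        Set.ncard_union_eq hdisj (Set.toFinite _) (Set.toFinite _)
      omega
    have hJempty : J = ∅ := by
      by_contra hne
      obtain ⟨v, hv⟩ := Set.nonempty_iff_ne_empty.mpr hne
      have hvcor : v ∈ corona G := Set.mem_sUnion.mpr ⟨S ∪ J, hSJmax, Or.inr hv⟩
      rw [← h] at hvcor
      obtain ⟨T, hT, hvT⟩ := Set.mem_sUnion.mp hvcor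
      exact hJR hv (KE_maxcrit_subset hS hT hvT)
    rw [hJempty, Set.union_empty] at hSJmax
    exact KE_of_crit_max_indep hS.1 hSJmax
end
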